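/- Let R′ be an n⁴ complex array of real type I and let η be a real metric that is R′-covariant. Then the braided covector algebra V̌(R′,R) admits a (necessarily unique) star structure * satisfying x_i* = Σ_a x_a η^{ai} for all i = 1,…,n. -/

import Mathlib

open scoped ComplexConjugate

noncomputable section

/-- An n⁴ array `R^i{}_j{}^k{}_l` viewed as an n²×n² matrix with row index `(i,k)`,
column index `(j,l)`. -/
def toMat (n : ℕ) (R : Fin n → Fin n → Fin n → Fin n → ℂ) :
    Matrix (Fin n × Fin n) (Fin n × Fin n) ℂ :=
  Matrix.of fun p q => R p.1 q.1 p.2 q.2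

/-- Entries `(R⁻¹)^i{}_j{}^k{}_l` of the matrix inverse of `R`. -/
def invEntry (n : ℕ) (R : Fin n → Fin n → Fin n → Fin n → ℂ)
    (i j k l : Fin n) : ℂ :=
  (toMat n R)⁻¹ (i, k) (j, l)

/-- `R` is of real type I: `conj (R^i{}_j{}^k{}_l) = R^l{}_k{}^j{}_i`. -/
def RealTypeI (n : ℕ) (R : Fin n → Fin n → Fin n → Fin n → ℂ) : Prop :=
  ∀ i j k l, conj (R i j k l) = R l k j i

/-- `R` is of antireal type I: `R` invertible and
`conj (R^i{}_j{}^k{}_l) = (R⁻¹)^j{}_i{}^l{}_k`. -/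
def AntirealTypeI (n : ℕ) (R : Fin n → Fin n → Fin n → Fin n → ℂ) : Prop :=
  IsUnit (toMat n R) ∧ ∀ i j k l, conj (R i j k l) = invEntry n R j i l k

/-- `R` is of real type II w.r.t. the involution `σ`:
`conj (R^i{}_j{}^k{}_l) = R^{σk}{}_{σl}{}^{σi}{}_{σj}`. -/
def RealTypeII (n : ℕ) (R : Fin n → Fin n → Fin n → Fin n → ℂ)
    (σ : Fin n → Fin n) : Prop :=
  ∀ i j k l, conj (R i j k l) = R (σ k) (σ l) (σ i) (σ j)

/-- `R` is of antireal type II w.r.t. the involution `σ`: `R` invertible and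
`conj (R^i{}_j{}^k{}_l) = (R⁻¹)^{σi}{}_{σj}{}^{σk}{}_{σl}`. -/
def AntirealTypeII (n : ℕ) (R : Fin n → Fin n → Fin n → Fin n → ℂ)
    (σ : Fin n → Fin n) : Prop :=
  IsUnit (toMat n R) ∧
    ∀ i j k l, conj (R i j k l) = invEntry n R (σ i) (σ j) (σ k) (σ l)

/-- The metric `η` (entries `η^{ij} = η i j`) is `R`-covariant:
`Σ η^{ia} η^{jb} R^k{}_a{}^l{}_b = Σ R^i{}_a{}^j{}_b η^{ak} η^{bl}`. -/
def MetricCovariant (n : ℕ) (R : Fin n → Fin n → Fin n → Fin n → ℂ)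
    (η : Matrix (Fin n) (Fin n) ℂ) : Prop :=
  ∀ i j k l, (∑ a : Fin n, ∑ b : Fin n, η i a * η j b * R k a l b) =
    ∑ a : Fin n, ∑ b : Fin n, R i a j b * η a k * η b l

/-- The metric `η` is real: `conj (η^{ij}) = η_{ji}`, where the lower-index entries
`η_{ij}` are those of the transposed inverse, i.e. `η_{ji} = (η⁻¹) i j`. -/
def MetricReal (n : ℕ) (η : Matrix (Fin n) (Fin n) ℂ) : Prop :=
  ∀ i j, conj (η i j) = η⁻¹ i j

/-- The relations `x_i x_j = Σ_{a,b} R'^a{}_i{}^b{}_j x_b x_a` of the braided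
covector algebra, as a relation on the free algebra. -/
inductive CovRel (n : ℕ) (R' : Fin n → Fin n → Fin n → Fin n → ℂ) :
    FreeAlgebra ℂ (Fin n) → FreeAlgebra ℂ (Fin n) → Prop
  | rel (i j : Fin n) :
      CovRel n R' (FreeAlgebra.ι ℂ i * FreeAlgebra.ι ℂ j)
        (∑ a : Fin n, ∑ b : Fin n,
          R' a i b j • (FreeAlgebra.ι ℂ b * FreeAlgebra.ι ℂ a))

/-- The braided covector algebra `V̌(R',R)`: the free algebra on `x_1,…,x_n` modulo
the two-sided ideal generated by `x_i x_j − Σ R'^a{}_i{}^b{}_j x_b x_a`. -/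
abbrev CovAlg (n : ℕ) (R' : Fin n → Fin n → Fin n → Fin n → ℂ) :=
  RingQuot (CovRel n R')

/-- The generator `x_i` of the braided covector algebra. -/
def xg (n : ℕ) (R' : Fin n → Fin n → Fin n → Fin n → ℂ) (i : Fin n) :
    CovAlg n R' :=
  RingQuot.mkAlgHom ℂ (CovRel n R') (FreeAlgebra.ι ℂ i)

/-- The relations `v^i v^j = Σ_{a,b} R'^i{}_a{}^j{}_b v^b v^a` of the braided
vector algebra, as a relation on the free algebra. -/
inductive VecRel (n : ℕ) (R' : Fin n → Fin n → Fin n → Fin n → ℂ) :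
    FreeAlgebra ℂ (Fin n) → FreeAlgebra ℂ (Fin n) → Prop
  | rel (i j : Fin n) :
      VecRel n R' (FreeAlgebra.ι ℂ i * FreeAlgebra.ι ℂ j)
        (∑ a : Fin n, ∑ b : Fin n,
          R' i a j b • (FreeAlgebra.ι ℂ b * FreeAlgebra.ι ℂ a))

/-- The braided vector algebra `V(R',R)`: the free algebra on `v^1,…,v^n` modulo
the two-sided ideal generated by `v^i v^j − Σ R'^i{}_a{}^j{}_b v^b v^a`. -/
abbrev VecAlg (n : ℕ) (R' : Fin n → Fin n → Fin n → Fin n → ℂ) :=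
  RingQuot (VecRel n R')

/-- The generator `v^i` of the braided vector algebra. -/
def vg (n : ℕ) (R' : Fin n → Fin n → Fin n → Fin n → ℂ) (i : Fin n) :
    VecAlg n R' :=
  RingQuot.mkAlgHom ℂ (VecRel n R') (FreeAlgebra.ι ℂ i)

/-- The relations of the braided tensor square of the braided covector algebra:
generators `x_i = ι (inl i)`, `y_i = ι (inr i)`, with `x`- and `y`-relations from
`R'` and cross relations `y_i x_j = Σ_{a,b} R^a{}_i{}^b{}_j x_b y_a`. -/
inductive SqRel (n : ℕ) (R' R : Fin n → Fin n → Fin n → Fin n → ℂ) :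
    FreeAlgebra ℂ (Fin n ⊕ Fin n) → FreeAlgebra ℂ (Fin n ⊕ Fin n) → Prop
  | xx (i j : Fin n) :
      SqRel n R' R (FreeAlgebra.ι ℂ (Sum.inl i) * FreeAlgebra.ι ℂ (Sum.inl j))
        (∑ a : Fin n, ∑ b : Fin n, R' a i b j •
          (FreeAlgebra.ι ℂ (Sum.inl b) * FreeAlgebra.ι ℂ (Sum.inl a)))
  | yy (i j : Fin n) :
      SqRel n R' R (FreeAlgebra.ι ℂ (Sum.inr i) * FreeAlgebra.ι ℂ (Sum.inr j))
        (∑ a : Fin n, ∑ b : Fin n, R' a i b j •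
          (FreeAlgebra.ι ℂ (Sum.inr b) * FreeAlgebra.ι ℂ (Sum.inr a)))
  | yx (i j : Fin n) :
      SqRel n R' R (FreeAlgebra.ι ℂ (Sum.inr i) * FreeAlgebra.ι ℂ (Sum.inl j))
        (∑ a : Fin n, ∑ b : Fin n, R a i b j •
          (FreeAlgebra.ι ℂ (Sum.inl b) * FreeAlgebra.ι ℂ (Sum.inr a)))

/-- The braided tensor square `B` of the braided covector algebra. -/
abbrev SqAlg (n : ℕ) (R' R : Fin n → Fin n → Fin n → Fin n → ℂ) :=
  RingQuot (SqRel n R' R)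

/-- The generator `x_i` of the braided tensor square. -/
def Xg (n : ℕ) (R' R : Fin n → Fin n → Fin n → Fin n → ℂ) (i : Fin n) :
    SqAlg n R' R :=
  RingQuot.mkAlgHom ℂ (SqRel n R' R) (FreeAlgebra.ι ℂ (Sum.inl i))

/-- The generator `y_i` of the braided tensor square. -/
def Yg (n : ℕ) (R' R : Fin n → Fin n → Fin n → Fin n → ℂ) (i : Fin n) :
    SqAlg n R' R :=
  RingQuot.mkAlgHom ℂ (SqRel n R' R) (FreeAlgebra.ι ℂ (Sum.inr i))

/-- A conjugate-linear, antimultiplicative, unital map between ℂ-algebras. -/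
def IsConjLinearAntiHom {A B : Type*} [Semiring A] [Algebra ℂ A]
    [Semiring B] [Algebra ℂ B] (f : A → B) : Prop :=
  (∀ a b : A, f (a + b) = f a + f b) ∧
  (∀ (c : ℂ) (a : A), f (c • a) = (starRingEnd ℂ) c • f a) ∧
  (∀ a b : A, f (a * b) = f b * f a) ∧
  f 1 = 1

/-- A star structure on a ℂ-algebra: a conjugate-linear, antimultiplicative,
unital, involutive map. -/
def IsStarStructure {A : Type*} [Semiring A] [Algebra ℂ A] (f : A → A) : Prop :=
  (∀ a b : A, f (a + b) = f a + f b) ∧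
  (∀ (c : ℂ) (a : A), f (c • a) = (starRingEnd ℂ) c • f a) ∧
  (∀ a b : A, f (a * b) = f b * f a) ∧
  f 1 = 1 ∧
  (∀ a : A, f (f a) = a)

open MulOpposite

set_option linter.unusedSectionVars false

namespace Stmt3Aux

variable {B : Type*}

def ConjOp (B : Type*) := Bᵐᵒᵖ

instance [Ring B] : Ring (ConjOp B) := inferInstanceAs (Ring Bᵐᵒᵖ)

def toOp (b : ConjOp B) : Bᵐᵒᵖ := b
def ofOp (b : Bᵐᵒᵖ) : ConjOp B := b

instance [Ring B] [Algebra ℂ B] : Algebra ℂ (ConjOp B) where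
  smul c b := ofOp ((starRingEnd ℂ c) • toOp b)
  algebraMap := ((algebraMap ℂ Bᵐᵒᵖ)).comp (starRingEnd ℂ)
  commutes' c x := Algebra.commutes (starRingEnd ℂ c) (toOp x)
  smul_def' c x := Algebra.smul_def (starRingEnd ℂ c) (toOp x)

variable [Ring B] [Algebra ℂ B]

def cop (b : B) : ConjOp B := op b
def unc (b : ConjOp B) : B := unop (toOp b)

@[simp] lemma unc_cop (b : B) : unc (cop b) = b := rfl
@[simp] lemma cop_unc (b : ConjOp B) : cop (unc b) = b := rfl
lemma cop_add (a b : B) : cop (a + b) = cop a + cop b := rfl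
lemma cop_mul (a b : B) : cop (a * b) = cop b * cop a := rfl
lemma cop_one : (cop 1 : ConjOp B) = 1 := rfl
lemma smul_cop (c : ℂ) (b : B) : c • cop b = cop (conj c • b) := rfl
lemma unc_add (a b : ConjOp B) : unc (a + b) = unc a + unc b := rfl
lemma unc_mul (a b : ConjOp B) : unc (a * b) = unc b * unc a := rfl
lemma unc_one : (unc 1 : B) = 1 := rfl
lemma unc_smul (c : ℂ) (b : ConjOp B) : unc (c • b) = conj c • unc b := rfl

def copHom : B →+ ConjOp B :=
  { toFun := cop, map_zero' := rfl, map_add' := fun _ _ => rfl }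

lemma cop_sum {ι : Type*} (s : Finset ι) (g : ι → B) :
    cop (∑ i ∈ s, g i) = ∑ i ∈ s, cop (g i) := map_sum (copHom) g s

lemma sum4_swap {M : Type*} [AddCommMonoid M] {n : ℕ}
    (f : Fin n → Fin n → Fin n → Fin n → M) :
    ∑ a, ∑ b, ∑ c, ∑ d, f a b c d = ∑ c, ∑ d, ∑ a, ∑ b, f a b c d := by
  calc ∑ a, ∑ b, ∑ c, ∑ d, f a b c d
      = ∑ a, ∑ c, ∑ b, ∑ d, f a b c d :=
        Finset.sum_congr rfl fun a _ => Finset.sum_comm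
    _ = ∑ c, ∑ a, ∑ b, ∑ d, f a b c d := Finset.sum_comm
    _ = ∑ c, ∑ a, ∑ d, ∑ b, f a b c d :=
        Finset.sum_congr rfl fun c _ => Finset.sum_congr rfl fun a _ => Finset.sum_comm
    _ = ∑ c, ∑ d, ∑ a, ∑ b, f a b c d :=
        Finset.sum_congr rfl fun c _ => Finset.sum_comm

end Stmt3Aux
open MulOpposite Stmt3Aux

section Stmt3Proof

variable {n : ℕ} {R' : Fin n → Fin n → Fin n → Fin n → ℂ}
  {η : Matrix (Fin n) (Fin n) ℂ}

lemma xg_rel (i j : Fin n) :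
    xg n R' i * xg n R' j = ∑ a, ∑ b, R' a i b j • (xg n R' b * xg n R' a) := by
  have h := RingQuot.mkAlgHom_rel ℂ (CovRel.rel (n := n) (R' := R') i j)
  simpa [xg, map_sum, map_mul] using h

lemma xg_rel' (a b : Fin n) :
    ∑ c : Fin n, ∑ d : Fin n, R' d a c b • (xg n R' c * xg n R' d)
      = xg n R' a * xg n R' b := by
  rw [Finset.sum_comm]
  exact (xg_rel a b).symm

lemma scalar_key (hR' : RealTypeI n R') (hcov : MetricCovariant n R' η)
    (i j c d : Fin n) :
    ∑ a : Fin n, ∑ b : Fin n, conj (R' a i b j) * (η c a * η d b)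
      = ∑ a : Fin n, ∑ b : Fin n, R' d a c b * (η a j * η b i) := by
  have e1 : ∀ a b : Fin n, conj (R' a i b j) * (η c a * η d b)
      = η d b * η c a * R' j b i a := by
    intro a b; rw [hR']; ring
  simp_rw [e1]
  rw [Finset.sum_comm]
  have h := hcov d c j i
  simpa [mul_assoc] using h

/-- `X i = Σ_a η^{ai} • x_a`. -/
def Xs (R' : Fin n → Fin n → Fin n → Fin n → ℂ) (η : Matrix (Fin n) (Fin n) ℂ)
    (i : Fin n) : CovAlg n R' :=
  ∑ a : Fin n, η a i • xg n R' a

lemma Xmul (i j : Fin n) :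
    Xs R' η i * Xs R' η j
      = ∑ c : Fin n, ∑ d : Fin n, (η c i * η d j) • (xg n R' c * xg n R' d) := by
  rw [Xs, Xs, Finset.sum_mul_sum]
  refine Finset.sum_congr rfl fun c _ => Finset.sum_congr rfl fun d _ => ?_
  rw [smul_mul_assoc, mul_smul_comm, smul_smul]

lemma key_identity (hR' : RealTypeI n R') (hcov : MetricCovariant n R' η)
    (i j : Fin n) :
    ∑ a : Fin n, ∑ b : Fin n, conj (R' a i b j) • (Xs R' η a * Xs R' η b)
      = Xs R' η j * Xs R' η i := by
  calc ∑ a : Fin n, ∑ b : Fin n, conj (R' a i b j) • (Xs R' η a * Xs R' η b)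
      = ∑ a : Fin n, ∑ b : Fin n, ∑ c : Fin n, ∑ d : Fin n,
          (conj (R' a i b j) * (η c a * η d b)) • (xg n R' c * xg n R' d) := by
        simp_rw [Xmul, Finset.smul_sum, smul_smul]
    _ = ∑ c : Fin n, ∑ d : Fin n, ∑ a : Fin n, ∑ b : Fin n,
          (conj (R' a i b j) * (η c a * η d b)) • (xg n R' c * xg n R' d) :=
        sum4_swap _
    _ = ∑ c : Fin n, ∑ d : Fin n,
          (∑ a : Fin n, ∑ b : Fin n, conj (R' a i b j) * (η c a * η d b)) •
            (xg n R' c * xg n R' d) := by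
        simp_rw [Finset.sum_smul]
    _ = ∑ c : Fin n, ∑ d : Fin n,
          (∑ a : Fin n, ∑ b : Fin n, R' d a c b * (η a j * η b i)) •
            (xg n R' c * xg n R' d) := by
        simp_rw [scalar_key hR' hcov]
    _ = ∑ c : Fin n, ∑ d : Fin n, ∑ a : Fin n, ∑ b : Fin n,
          ((η a j * η b i) * R' d a c b) • (xg n R' c * xg n R' d) := by
        refine Finset.sum_congr rfl fun c _ => Finset.sum_congr rfl fun d _ => ?_
        rw [Finset.sum_smul]
        refine Finset.sum_congr rfl fun a _ => ?_
        rw [Finset.sum_smul]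
        exact Finset.sum_congr rfl fun b _ => by rw [mul_comm]
    _ = ∑ a : Fin n, ∑ b : Fin n, ∑ c : Fin n, ∑ d : Fin n,
          ((η a j * η b i) * R' d a c b) • (xg n R' c * xg n R' d) :=
        (sum4_swap _).symm
    _ = ∑ a : Fin n, ∑ b : Fin n, (η a j * η b i) •
          (∑ c : Fin n, ∑ d : Fin n, R' d a c b • (xg n R' c * xg n R' d)) := by
        simp_rw [Finset.smul_sum, smul_smul]
    _ = ∑ a : Fin n, ∑ b : Fin n, (η a j * η b i) • (xg n R' a * xg n R' b) := by
        simp_rw [xg_rel']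
    _ = Xs R' η j * Xs R' η i := (Xmul j i).symm

end Stmt3Proof
/-- if `R'` is of real type I and `η` is a real `R'`-covariant metric,
the braided covector algebra admits a unique star structure with
`x_i* = Σ_a x_a η^{ai}`. -/
theorem stmt3 (n : ℕ) (hn : 1 ≤ n)
    (R R' : Fin n → Fin n → Fin n → Fin n → ℂ)
    (hR' : RealTypeI n R')
    (η : Matrix (Fin n) (Fin n) ℂ) (hη : IsUnit η)
    (hreal : MetricReal n η) (hcov : MetricCovariant n R' η) :
    ∃! f : CovAlg n R' → CovAlg n R',
      IsStarStructure f ∧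
        ∀ i : Fin n, f (xg n R' i) = ∑ a : Fin n, η a i • xg n R' a := by
  classical
  let F : FreeAlgebra ℂ (Fin n) →ₐ[ℂ] ConjOp (CovAlg n R') :=
    FreeAlgebra.lift ℂ fun i => cop (Xs R' η i)
  have hcompat : ∀ ⦃x y⦄, CovRel n R' x y → F x = F y := by
    rintro _ _ ⟨i, j⟩
    simp only [F, map_mul, map_sum, map_smul, FreeAlgebra.lift_ι_apply]
    rw [← cop_mul]
    have e : ∀ a b : Fin n, R' a i b j • (cop (Xs R' η b) * cop (Xs R' η a))
        = cop (conj (R' a i b j) • (Xs R' η a * Xs R' η b)) := fun a b => by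
      rw [← cop_mul, smul_cop]
    simp_rw [e, ← cop_sum]
    exact (congrArg cop (key_identity hR' hcov i j)).symm
  let Φ : CovAlg n R' →ₐ[ℂ] ConjOp (CovAlg n R') :=
    RingQuot.liftAlgHom ℂ ⟨F, hcompat⟩
  let f : CovAlg n R' → CovAlg n R' := fun a => unc (Φ a)
  have f_add : ∀ a b, f (a + b) = f a + f b := fun a b => by
    simp only [f, map_add]; rfl
  have f_smul : ∀ (c : ℂ) (a), f (c • a) = (starRingEnd ℂ) c • f a := fun c a => by
    simp only [f, map_smul]; rfl
  have f_mul : ∀ a b, f (a * b) = f b * f a := fun a b => by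
    simp only [f, map_mul]; rfl
  have f_one : f 1 = 1 := by simp only [f, map_one]; rfl
  have f_zero : f 0 = 0 := by simp only [f, map_zero]; rfl
  have f_sum : ∀ (g : Fin n → CovAlg n R'),
      f (∑ i, g i) = ∑ i, f (g i) := fun g =>
    map_sum (⟨⟨f, f_zero⟩, fun a b => f_add a b⟩ : CovAlg n R' →+ CovAlg n R') g Finset.univ
  have f_gen : ∀ i, f (xg n R' i) = Xs R' η i := by
    intro i
    show unc (Φ (RingQuot.mkAlgHom ℂ _ (FreeAlgebra.ι ℂ i))) = _
    rw [show Φ (RingQuot.mkAlgHom ℂ _ (FreeAlgebra.ι ℂ i)) = F (FreeAlgebra.ι ℂ i)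
      from RingQuot.liftAlgHom_mkAlgHom_apply ℂ _ _ _]
    simp [F, FreeAlgebra.lift_ι_apply]
  have hmulinv : η * η⁻¹ = 1 :=
    Matrix.mul_nonsing_inv η ((Matrix.isUnit_iff_isUnit_det η).mp hη)
  have ffgen : ∀ i, f (Xs R' η i) = xg n R' i := by
    intro i
    rw [Xs, f_sum]
    simp_rw [f_smul, f_gen, Xs, Finset.smul_sum, smul_smul]
    rw [Finset.sum_comm]
    have e : ∀ b : Fin n,
        ∑ a : Fin n, ((starRingEnd ℂ) (η a i) * η b a) • xg n R' b
          = ((η * η⁻¹) b i) • xg n R' b := by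
      intro b
      rw [Matrix.mul_apply, Finset.sum_smul]
      exact Finset.sum_congr rfl fun a _ => by rw [hreal a i, mul_comm]
    simp_rw [e, hmulinv]
    simp [Matrix.one_apply, ite_smul]
  have hinv : ∀ a, f (f a) = a := by
    intro a
    obtain ⟨b, rfl⟩ := RingQuot.mkAlgHom_surjective ℂ (CovRel n R') a
    induction b using FreeAlgebra.induction with
    | grade0 c =>
        rw [AlgHom.commutes, Algebra.algebraMap_eq_smul_one, f_smul, f_one,
          f_smul, f_one, Complex.conj_conj]
    | grade1 i =>
        show f (f (xg n R' i)) = xg n R' i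
        rw [f_gen, ffgen]
    | mul x y hx hy => rw [map_mul, f_mul, f_mul, hx, hy]
    | add x y hx hy => rw [map_add, f_add, f_add, hx, hy]
  refine ⟨f, ⟨⟨f_add, f_smul, f_mul, f_one, hinv⟩, fun i => by rw [f_gen, Xs]⟩, ?_⟩
  rintro g ⟨⟨g_add, g_smul, g_mul, g_one, -⟩, g_gen⟩
  funext a
  obtain ⟨b, rfl⟩ := RingQuot.mkAlgHom_surjective ℂ (CovRel n R') a
  induction b using FreeAlgebra.induction with
  | grade0 c =>
      rw [AlgHom.commutes, Algebra.algebraMap_eq_smul_one, g_smul, f_smul,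
        g_one, f_one]
  | grade1 i =>
      show g (xg n R' i) = f (xg n R' i)
      rw [g_gen, f_gen, Xs]
  | mul x y hx hy => rw [map_mul, g_mul, f_mul, hx, hy]
  | add x y hx hy => rw [map_add, g_add, f_add, hx, hy]
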